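/- Let N ⊆ M be an irreducible inclusion of von Neumann factors (N' ∩ M = ℂ1) with canonical endomorphism γ and an isometry w ∈ N satisfying w* w = 1 and w n = γ(n) w for all n ∈ N. Then the map E : M → N given by E(m) = w* γ(m) w is a conditional expectation from M onto N (i.e., E is a unital positive linear map with E(n₁ m n₂) = n₁ E(m) n₂ for all n₁, n₂ ∈ N and m ∈ M, and E restricts to the identity on N). -/
import Mathlib


/-- For an irreducible inclusion of factors `N ⊆ M` with canonical
endomorphism `γ` and an intertwining isometry `w ∈ N`, the map `E(m) = w* γ(m) w`
is a conditional expectation from `M` onto `N`: it is unital, maps `M` into `N`,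
is positive, has the `N`-bimodule property, and restricts to the identity on `N`.
(Linearity of `E` is automatic from the formula.) -/
theorem conditional_expectation_from_intertwiner
    {B : Type*} [Ring B] [StarRing B] [Algebra ℂ B] [StarModule ℂ B]
    (M N : StarSubalgebra ℂ B) (hNM : N ≤ M)
    (hirr : ∀ x ∈ M, (∀ n ∈ N, n * x = x * n) → ∃ c : ℂ, x = c • (1 : B))
    (γ : B →⋆ₐ[ℂ] B) (hγinj : Function.Injective γ)
    (hγM : ∀ m ∈ M, γ m ∈ N)
    (w : B) (hwN : w ∈ N) (hwiso : star w * w = 1)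
    (hwint : ∀ n ∈ N, w * n = γ n * w) :
    (star w * γ 1 * w = 1) ∧
    (∀ m ∈ M, star w * γ m * w ∈ N) ∧
    (∀ m : B, ∃ b : B, star w * γ (star m * m) * w = star b * b) ∧
    (∀ n₁ ∈ N, ∀ n₂ ∈ N, ∀ m : B,
        star w * γ (n₁ * m * n₂) * w = n₁ * (star w * γ m * w) * n₂) ∧
    (∀ n ∈ N, star w * γ n * w = n) := by
  have hstar : ∀ n ∈ N, n * star w = star w * γ n := by
    intro n hn
    have h := hwint (star n) (star_mem hn)
    calc n * star w = star (w * star n) := by simp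
    _ = star (γ (star n) * w) := by rw [h]
    _ = star w * γ n := by rw [star_mul]; simp [map_star]
  have hid : ∀ n ∈ N, star w * γ n * w = n := by
    intro n hn
    rw [mul_assoc, ← hwint n hn, ← mul_assoc, hwiso, one_mul]
  refine ⟨?_, ?_, ?_, ?_, hid⟩
  · simpa using hid 1 (one_mem N)
  · intro m hm
    exact mul_mem (mul_mem (star_mem hwN) (hγM m hm)) hwN
  · intro m
    refine ⟨γ m * w, ?_⟩
    simp [map_mul, map_star, mul_assoc]
  · intro n₁ hn₁ n₂ hn₂ m
    rw [map_mul, map_mul]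
    rw [show star w * (γ n₁ * γ m * γ n₂) * w = (star w * γ n₁) * γ m * (γ n₂ * w) by noncomm_ring,
      ← hstar n₁ hn₁, ← hwint n₂ hn₂]
    noncomm_ring
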